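/- An S(2,3,v) with v ≥ 3 is 5-even-free if and only if it contains no Pasch configuration, i.e., no four blocks on six points of the form {a,b,c}, {a,d,e}, {f,b,d}, {f,c,e} with a,b,c,d,e,f distinct. In particular, every 4-even-free S(2,3,v) is 5-even-free. -/

import Mathlib

/-- A configuration `C` (a subfamily of the block set) is even if every point
lies in an even number of blocks of `C`. -/
def IsEvenConfig {V : Type*} [DecidableEq V] (C : Finset (Finset V)) : Prop :=
  ∀ x : V, Even ((C.filter (fun blk => x ∈ blk)).card)

/-- A design with block set `B` is `r`-even-free if no nonempty subfamily of at
most `r` blocks is an even configuration. -/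
def EvenFree {V : Type*} [DecidableEq V] (B : Finset (Finset V)) (r : ℕ) : Prop :=
  ∀ C ⊆ B, C.Nonempty → C.card ≤ r → ¬ IsEvenConfig C

lemma no_odd {V} [DecidableEq V] [Fintype V] (C : Finset (Finset V))
    (hsize : ∀ blk ∈ C, blk.card = 3) (hodd : Odd C.card)
    (h : IsEvenConfig C) : False := by
  have key : ∑ blk ∈ C, blk.card = ∑ x : V, (C.filter (fun b => x ∈ b)).card := by
    simp only [Finset.card_filter]
    rw [Finset.sum_comm]
    simp [Finset.sum_boole]
  have h1 : ∑ blk ∈ C, blk.card = 3 * C.card := by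
    rw [Finset.sum_congr rfl hsize]; ring_nf; simp [mul_comm]
  have h2 : Even (∑ x : V, (C.filter (fun b => x ∈ b)).card) :=
    Finset.even_sum _ (fun x _ => h x)
  rw [← key, h1] at h2
  rcases hodd with ⟨k, hk⟩
  rcases h2 with ⟨m, hm⟩
  omega

lemma no_two {V} [DecidableEq V] (C : Finset (Finset V)) (h2 : C.card = 2)
    (h : IsEvenConfig C) : False := by
  obtain ⟨b1, b2, hne, rfl⟩ := Finset.card_eq_two.mp h2
  have : ∃ x, (x ∈ b1 ∧ x ∉ b2) ∨ (x ∈ b2 ∧ x ∉ b1) := by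
    by_contra hc
    push_neg at hc
    exact hne (Finset.ext fun x => ⟨fun hx => by have := hc x; tauto,
      fun hx => by have := hc x; tauto⟩)
  obtain ⟨x, hx⟩ := this
  have hev := h x
  rcases hx with ⟨hx1, hx2⟩ | ⟨hx1, hx2⟩ <;>
  · rw [Finset.filter_insert] at hev
    simp [hx1, hx2, Finset.filter_singleton] at hev

lemma card_filter_four {α : Type*} [DecidableEq α] (p : α → Prop) [DecidablePred p]
    (a b c d : α) (hab : a ≠ b) (hac : a ≠ c) (had : a ≠ d)
    (hbc : b ≠ c) (hbd : b ≠ d) (hcd : c ≠ d) :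
    (({a, b, c, d} : Finset α).filter p).card =
      (if p a then 1 else 0) + ((if p b then 1 else 0) +
        ((if p c then 1 else 0) + (if p d then 1 else 0))) := by
  rw [Finset.card_filter]
  rw [show ({a, b, c, d} : Finset α) = insert a (insert b (insert c ({d} : Finset α))) from rfl]
  rw [Finset.sum_insert (by simp [hab, hac, had]),
    Finset.sum_insert (by simp [hbc, hbd]),
    Finset.sum_insert (by simp [hcd]),
    Finset.sum_singleton]

lemma other_of_two {α} [DecidableEq α] {s : Finset α} (h : s.card = 2) {a : α} (ha : a ∈ s) :
    ∃ b ∈ s, b ≠ a ∧ ∀ c ∈ s, c ≠ a → c = b := by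
  obtain ⟨x, y, hxy, rfl⟩ := Finset.card_eq_two.mp h
  rcases Finset.mem_insert.mp ha with rfl | ha'
  · refine ⟨y, by simp, hxy.symm, ?_⟩
    intro c hc hca
    rcases Finset.mem_insert.mp hc with rfl | h
    · exact absurd rfl hca
    · simpa using h
  · rw [Finset.mem_singleton] at ha'; subst ha'
    refine ⟨x, by simp, hxy, ?_⟩
    intro c hc hca
    rcases Finset.mem_insert.mp hc with rfl | h
    · rfl
    · rw [Finset.mem_singleton] at h; exact absurd h hca

set_option maxHeartbeats 1000000 in
lemma extract_pasch {V : Type*} [DecidableEq V] (B C : Finset (Finset V)) (hCB : C ⊆ B)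
    (hsize : ∀ blk ∈ B, blk.card = 3)
    (hpair : ∀ x y : V, x ≠ y → (B.filter (fun blk => x ∈ blk ∧ y ∈ blk)).card = 1)
    (h4 : C.card = 4) (hev : IsEvenConfig C) :
    ∃ a b c d e f : V, ([a, b, c, d, e, f] : List V).Pairwise (· ≠ ·) ∧
        ({a, b, c} : Finset V) ∈ B ∧ ({a, d, e} : Finset V) ∈ B ∧
        ({f, b, d} : Finset V) ∈ B ∧ ({f, c, e} : Finset V) ∈ B := by
  classical
  -- two distinct blocks of B share at most one point
  have hdis : ∀ b1 ∈ B, ∀ b2 ∈ B, b1 ≠ b2 → ∀ x y : V, x ≠ y →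
      x ∈ b1 → y ∈ b1 → x ∈ b2 → y ∈ b2 → False := by
    intro b1 h1 b2 h2 hne x y hxy hx1 hy1 hx2 hy2
    have hcard := hpair x y hxy
    have : 1 < (B.filter (fun blk => x ∈ blk ∧ y ∈ blk)).card :=
      Finset.one_lt_card.mpr ⟨b1, by simp [Finset.mem_filter, h1, hx1, hy1],
        b2, by simp [Finset.mem_filter, h2, hx2, hy2], hne⟩
    omega
  -- every point in a block of C has degree exactly 2
  have hdeg : ∀ x : V, ∀ blk ∈ C, x ∈ blk → (C.filter (fun b => x ∈ b)).card = 2 := by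
    intro x blk hblk hx
    have hmem : blk ∈ C.filter (fun b => x ∈ b) := Finset.mem_filter.mpr ⟨hblk, hx⟩
    have h1 : 1 ≤ (C.filter (fun b => x ∈ b)).card := Finset.card_pos.mpr ⟨blk, hmem⟩
    have hle : (C.filter (fun b => x ∈ b)).card ≤ 4 := h4 ▸ Finset.card_le_card (Finset.filter_subset _ _)
    have hevx := hev x
    rcases hevx with ⟨k, hk⟩
    have : (C.filter (fun b => x ∈ b)).card = 2 ∨ (C.filter (fun b => x ∈ b)).card = 4 := by omega
    rcases this with h | h
    · exact h
    · exfalso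
      -- x is in all four blocks
      have hall : ∀ b ∈ C, x ∈ b := by
        have heq : C ⊆ C.filter (fun b => x ∈ b) := by
          rw [Finset.eq_of_subset_of_card_le (Finset.filter_subset (fun b => x ∈ b) C) (by omega)]
        intro b hb
        exact (Finset.mem_filter.mp (heq hb)).2
      -- pick y ∈ blk, y ≠ x
      obtain ⟨y, hy, hyx⟩ := Finset.exists_mem_ne (by rw [hsize blk (hCB hblk)]; omega) x
      -- y has degree ≥ 2
      have hy1 : blk ∈ C.filter (fun b => y ∈ b) := Finset.mem_filter.mpr ⟨hblk, hy⟩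
      have := hev y
      rcases this with ⟨m, hm⟩
      have h1y : 1 ≤ (C.filter (fun b => y ∈ b)).card := Finset.card_pos.mpr ⟨blk, hy1⟩
      have : 1 < (C.filter (fun b => y ∈ b)).card := by omega
      obtain ⟨c1, hc1, c2, hc2, hc12⟩ := Finset.one_lt_card.mp this
      obtain ⟨hc1C, hc1y⟩ := Finset.mem_filter.mp hc1
      obtain ⟨hc2C, hc2y⟩ := Finset.mem_filter.mp hc2
      exact hdis c1 (hCB hc1C) c2 (hCB hc2C) hc12 x y hyx.symm (hall c1 hc1C) hc1y (hall c2 hc2C) hc2y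
  -- helper: the "other" block through a point
  have hother : ∀ x : V, ∀ blk ∈ C, x ∈ blk →
      ∃ b' ∈ C, b' ≠ blk ∧ x ∈ b' ∧ ∀ c ∈ C, x ∈ c → c ≠ blk → c = b' := by
    intro x blk hblk hx
    obtain ⟨b', hb', hbne, huniq⟩ := other_of_two (hdeg x blk hblk hx)
        (Finset.mem_filter.mpr ⟨hblk, hx⟩)
    obtain ⟨hb'C, hb'x⟩ := Finset.mem_filter.mp hb'
    exact ⟨b', hb'C, hbne, hb'x, fun c hc hcx hcne =>
      huniq c (Finset.mem_filter.mpr ⟨hc, hcx⟩) hcne⟩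
  -- pick B1 and its three points
  obtain ⟨B1, hB1⟩ : C.Nonempty := Finset.card_pos.mp (by omega)
  obtain ⟨a, b, c, hab, hac, hbc, hB1eq⟩ := Finset.card_eq_three.mp (hsize B1 (hCB hB1))
  have haB1 : a ∈ B1 := by rw [hB1eq]; simp
  have hbB1 : b ∈ B1 := by rw [hB1eq]; simp
  have hcB1 : c ∈ B1 := by rw [hB1eq]; simp
  obtain ⟨B2, hB2C, hB2ne, haB2, hB2u⟩ := hother a B1 hB1 haB1
  obtain ⟨B3, hB3C, hB3ne, hbB3, hB3u⟩ := hother b B1 hB1 hbB1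
  obtain ⟨B4, hB4C, hB4ne, hcB4, hB4u⟩ := hother c B1 hB1 hcB1
  have h23 : B2 ≠ B3 := fun h =>
    hdis B1 (hCB hB1) B2 (hCB hB2C) (Ne.symm hB2ne) a b hab haB1 hbB1 haB2 (h ▸ hbB3)
  have h24 : B2 ≠ B4 := fun h =>
    hdis B1 (hCB hB1) B2 (hCB hB2C) (Ne.symm hB2ne) a c hac haB1 hcB1 haB2 (h ▸ hcB4)
  have h34 : B3 ≠ B4 := fun h =>
    hdis B1 (hCB hB1) B3 (hCB hB3C) (Ne.symm hB3ne) b c hbc hbB1 hcB1 hbB3 (h ▸ hcB4)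
  have hsub : ({B1, B2, B3, B4} : Finset (Finset V)) ⊆ C := by
    intro x hx
    simp only [Finset.mem_insert, Finset.mem_singleton] at hx
    rcases hx with rfl | rfl | rfl | rfl <;> assumption
  have hCeq : C = {B1, B2, B3, B4} := by
    refine (Finset.eq_of_subset_of_card_le hsub ?_).symm
    rw [h4]
    rw [Finset.card_insert_of_notMem (by
        simp only [Finset.mem_insert, Finset.mem_singleton]
        push_neg
        exact ⟨hB2ne.symm, hB3ne.symm, hB4ne.symm⟩),
      Finset.card_insert_of_notMem (by
        simp only [Finset.mem_insert, Finset.mem_singleton]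
        push_neg
        exact ⟨h23, h24⟩),
      Finset.card_insert_of_notMem (by simpa using h34), Finset.card_singleton]
  -- decompose B2 = {a, d, e}
  have hB2card : B2.card = 3 := hsize B2 (hCB hB2C)
  have herase : (B2.erase a).card = 2 := by rw [Finset.card_erase_of_mem haB2, hB2card]
  obtain ⟨d, e, hde, hdeeq⟩ := Finset.card_eq_two.mp herase
  have hdmem : d ∈ B2.erase a := by rw [hdeeq]; simp
  have hemem : e ∈ B2.erase a := by rw [hdeeq]; simp
  have hda : d ≠ a := (Finset.mem_erase.mp hdmem).1
  have hdB2 : d ∈ B2 := (Finset.mem_erase.mp hdmem).2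
  have hea : e ≠ a := (Finset.mem_erase.mp hemem).1
  have heB2 : e ∈ B2 := (Finset.mem_erase.mp hemem).2
  have hB2eq : B2 = {a, d, e} := by
    rw [show ({a, d, e} : Finset V) = insert a ({d, e} : Finset V) from rfl, ← hdeeq,
      Finset.insert_erase haB2]
  have hdB1 : d ∉ B1 := fun h =>
    hdis B1 (hCB hB1) B2 (hCB hB2C) (Ne.symm hB2ne) a d hda.symm haB1 h haB2 hdB2
  have heB1 : e ∉ B1 := fun h =>
    hdis B1 (hCB hB1) B2 (hCB hB2C) (Ne.symm hB2ne) a e hea.symm haB1 h haB2 heB2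
  -- second blocks of d and e
  have hsecond : ∀ x : V, x ∈ B2 → x ∉ B1 → x ∈ B3 ∨ x ∈ B4 := by
    intro x hx hx1
    obtain ⟨D, hDC, hDne, hxD, _⟩ := hother x B2 hB2C hx
    have : D ∈ ({B1, B2, B3, B4} : Finset (Finset V)) := hCeq ▸ hDC
    simp only [Finset.mem_insert, Finset.mem_singleton] at this
    rcases this with rfl | rfl | rfl | rfl
    · exact absurd hxD hx1
    · exact absurd rfl hDne
    · exact Or.inl hxD
    · exact Or.inr hxD
  have hkey : (d ∈ B3 ∧ e ∈ B4) ∨ (d ∈ B4 ∧ e ∈ B3) := by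
    rcases hsecond d hdB2 hdB1 with h3 | h4' <;> rcases hsecond e heB2 heB1 with h3' | h4''
    · exact (hdis B2 (hCB hB2C) B3 (hCB hB3C) h23 d e hde hdB2 heB2 h3 h3').elim
    · exact Or.inl ⟨h3, h4''⟩
    · exact Or.inr ⟨h4', h3'⟩
    · exact (hdis B2 (hCB hB2C) B4 (hCB hB4C) h24 d e hde hdB2 heB2 h4' h4'').elim
  clear hdmem hemem hdeeq herase
  obtain ⟨d, e, hde, hda, hea, hdB2, heB2, hdB1, heB1, hB2eq, hdB3, heB4⟩ :
      ∃ d e : V, d ≠ e ∧ d ≠ a ∧ e ≠ a ∧ d ∈ B2 ∧ e ∈ B2 ∧ d ∉ B1 ∧ e ∉ B1 ∧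
        B2 = {a, d, e} ∧ d ∈ B3 ∧ e ∈ B4 := by
    rcases hkey with ⟨h3, h4'⟩ | ⟨h4', h3⟩
    · exact ⟨d, e, hde, hda, hea, hdB2, heB2, hdB1, heB1, hB2eq, h3, h4'⟩
    · refine ⟨e, d, hde.symm, hea, hda, heB2, hdB2, heB1, hdB1, ?_, h3, h4'⟩
      rw [hB2eq]
      ext x
      simp only [Finset.mem_insert, Finset.mem_singleton]
      tauto
  -- third point f of B3
  have hbd : b ≠ d := fun h => hdB1 (h ▸ hbB1)
  have hB3card : B3.card = 3 := hsize B3 (hCB hB3C)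
  have hdmem3 : d ∈ B3.erase b := Finset.mem_erase.mpr ⟨fun h => hbd h.symm, hdB3⟩
  have herase3 : ((B3.erase b).erase d).card = 1 := by
    rw [Finset.card_erase_of_mem hdmem3, Finset.card_erase_of_mem hbB3, hB3card]
  obtain ⟨f, hf⟩ := Finset.card_eq_one.mp herase3
  have hfmem : f ∈ (B3.erase b).erase d := by rw [hf]; simp
  have hfd : f ≠ d := (Finset.mem_erase.mp hfmem).1
  have hfb : f ≠ b := (Finset.mem_erase.mp (Finset.mem_erase.mp hfmem).2).1
  have hfB3 : f ∈ B3 := (Finset.mem_erase.mp (Finset.mem_erase.mp hfmem).2).2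
  have hB3eq : B3 = {b, d, f} := by
    rw [show ({b, d, f} : Finset V) = insert b (insert d ({f} : Finset V)) from rfl, ← hf,
      Finset.insert_erase hdmem3, Finset.insert_erase hbB3]
  have hfB1 : f ∉ B1 := fun h =>
    hdis B1 (hCB hB1) B3 (hCB hB3C) (Ne.symm hB3ne) b f hfb.symm hbB1 h hbB3 hfB3
  have hfB2 : f ∉ B2 := fun h =>
    hdis B2 (hCB hB2C) B3 (hCB hB3C) h23 d f hfd.symm hdB2 h hdB3 hfB3
  -- second block of f is B4
  have hfB4 : f ∈ B4 := by
    obtain ⟨F, hFC, hFne, hfF, _⟩ := hother f B3 hB3C hfB3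
    have : F ∈ ({B1, B2, B3, B4} : Finset (Finset V)) := hCeq ▸ hFC
    simp only [Finset.mem_insert, Finset.mem_singleton] at this
    rcases this with rfl | rfl | rfl | rfl
    · exact absurd hfF hfB1
    · exact absurd hfF hfB2
    · exact absurd rfl hFne
    · exact hfF
  -- B4 = {c, e, f}
  have hce : c ≠ e := fun h => heB1 (h ▸ hcB1)
  have hcf : c ≠ f := fun h => hfB1 (h ▸ hcB1)
  have hef : e ≠ f := fun h => hfB2 (h ▸ heB2)
  have hB4eq : B4 = {c, e, f} := by
    refine (Finset.eq_of_subset_of_card_le ?_ ?_).symm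
    · intro x hx
      simp only [Finset.mem_insert, Finset.mem_singleton] at hx
      rcases hx with rfl | rfl | rfl
      · exact hcB4
      · exact heB4
      · exact hfB4
    · rw [hsize B4 (hCB hB4C)]
      rw [Finset.card_insert_of_notMem (by simp [hce, hcf]),
        Finset.card_insert_of_notMem (by simp [hef]), Finset.card_singleton]
  -- remaining distinctness
  have hdb : d ≠ b := fun h => hdB1 (h ▸ hbB1)
  have hdc : d ≠ c := fun h => hdB1 (h ▸ hcB1)
  have heb : e ≠ b := fun h => heB1 (h ▸ hbB1)
  have hec : e ≠ c := fun h => heB1 (h ▸ hcB1)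
  have hfa : f ≠ a := fun h => hfB1 (h ▸ haB1)
  have hfe : f ≠ e := hef.symm
  have had : a ≠ d := hda.symm
  have hae : a ≠ e := hea.symm
  have haf : a ≠ f := hfa.symm
  have hbe : b ≠ e := heb.symm
  have hbf : b ≠ f := hfb.symm
  have hcd : c ≠ d := hdc.symm
  have hdf : d ≠ f := hfd.symm
  refine ⟨a, b, c, d, e, f, ?_, ?_, ?_, ?_, ?_⟩
  · refine List.Pairwise.cons (fun x hx => ?_) (List.Pairwise.cons (fun x hx => ?_)
      (List.Pairwise.cons (fun x hx => ?_) (List.Pairwise.cons (fun x hx => ?_)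
      (List.Pairwise.cons (fun x hx => ?_) (List.pairwise_singleton _ f)))))
    · simp only [List.mem_cons, List.not_mem_nil, or_false] at hx
      obtain rfl | rfl | rfl | rfl | rfl := hx <;> assumption
    · simp only [List.mem_cons, List.not_mem_nil, or_false] at hx
      obtain rfl | rfl | rfl | rfl := hx <;> assumption
    · simp only [List.mem_cons, List.not_mem_nil, or_false] at hx
      obtain rfl | rfl | rfl := hx <;> assumption
    · simp only [List.mem_cons, List.not_mem_nil, or_false] at hx
      obtain rfl | rfl := hx <;> assumption
    · simp only [List.mem_cons, List.not_mem_nil, or_false] at hx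
      obtain rfl := hx; assumption
  · rw [← hB1eq]; exact hCB hB1
  · rw [← hB2eq]; exact hCB hB2C
  · have : ({f, b, d} : Finset V) = B3 := by
      rw [hB3eq]; ext x
      simp only [Finset.mem_insert, Finset.mem_singleton]
      tauto
    rw [this]; exact hCB hB3C
  · have : ({f, c, e} : Finset V) = B4 := by
      rw [hB4eq]; ext x
      simp only [Finset.mem_insert, Finset.mem_singleton]
      tauto
    rw [this]; exact hCB hB4C


lemma pasch_config {V : Type*} [DecidableEq V] (B : Finset (Finset V))
    (hp : ∃ a b c d e f : V, ([a, b, c, d, e, f] : List V).Pairwise (· ≠ ·) ∧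
        ({a, b, c} : Finset V) ∈ B ∧ ({a, d, e} : Finset V) ∈ B ∧
        ({f, b, d} : Finset V) ∈ B ∧ ({f, c, e} : Finset V) ∈ B) :
    ∃ C ⊆ B, C.Nonempty ∧ C.card ≤ 4 ∧ IsEvenConfig C := by
  classical
  obtain ⟨a, b, c, d, e, f, hpw, h1B, h2B, h3B, h4B⟩ := hp
  simp only [List.pairwise_cons, List.mem_cons, List.not_mem_nil, or_false,
    forall_eq_or_imp, forall_eq, List.Pairwise.nil, and_true] at hpw
  obtain ⟨⟨hab, hac, had, hae, haf⟩, ⟨hbc, hbd, hbe, hbf⟩, ⟨hcd, hce, hcf⟩, ⟨hde, hdf⟩, hef, -⟩ := hpw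
  set A1 : Finset V := {a, b, c} with hA1
  set A2 : Finset V := {a, d, e} with hA2
  set A3 : Finset V := {f, b, d} with hA3
  set A4 : Finset V := {f, c, e} with hA4
  have h12 : A1 ≠ A2 := fun h => by
    have : b ∈ A2 := h ▸ (by simp [hA1] : b ∈ A1)
    simp only [hA2, Finset.mem_insert, Finset.mem_singleton] at this
    rcases this with h' | h' | h'
    exacts [hab h'.symm, hbd h', hbe h']
  have h13 : A1 ≠ A3 := fun h => by
    have : a ∈ A3 := h ▸ (by simp [hA1] : a ∈ A1)
    simp only [hA3, Finset.mem_insert, Finset.mem_singleton] at this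
    rcases this with h' | h' | h'
    exacts [haf h', hab h', had h']
  have h14 : A1 ≠ A4 := fun h => by
    have : a ∈ A4 := h ▸ (by simp [hA1] : a ∈ A1)
    simp only [hA4, Finset.mem_insert, Finset.mem_singleton] at this
    rcases this with h' | h' | h'
    exacts [haf h', hac h', hae h']
  have h23 : A2 ≠ A3 := fun h => by
    have : a ∈ A3 := h ▸ (by simp [hA2] : a ∈ A2)
    simp only [hA3, Finset.mem_insert, Finset.mem_singleton] at this
    rcases this with h' | h' | h'
    exacts [haf h', hab h', had h']
  have h24 : A2 ≠ A4 := fun h => by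
    have : a ∈ A4 := h ▸ (by simp [hA2] : a ∈ A2)
    simp only [hA4, Finset.mem_insert, Finset.mem_singleton] at this
    rcases this with h' | h' | h'
    exacts [haf h', hac h', hae h']
  have h34 : A3 ≠ A4 := fun h => by
    have : b ∈ A4 := h ▸ (by simp [hA3] : b ∈ A3)
    simp only [hA4, Finset.mem_insert, Finset.mem_singleton] at this
    rcases this with h' | h' | h'
    exacts [hbf h', hbc h', hbe h']
  refine ⟨{A1, A2, A3, A4}, ?_, ⟨A1, by simp⟩, ?_, ?_⟩
  · intro x hx
    simp only [Finset.mem_insert, Finset.mem_singleton] at hx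
    rcases hx with rfl | rfl | rfl | rfl <;> assumption
  · have t1 := Finset.card_insert_le A1 ({A2, A3, A4} : Finset (Finset V))
    have t2 := Finset.card_insert_le A2 ({A3, A4} : Finset (Finset V))
    have t3 := Finset.card_insert_le A3 ({A4} : Finset (Finset V))
    have t4 : ({A4} : Finset (Finset V)).card = 1 := Finset.card_singleton _
    omega
  · have hba := hab.symm; have hca := hac.symm; have hda := had.symm
    have hea := hae.symm; have hfa := haf.symm; have hcb := hbc.symm
    have hdb := hbd.symm; have heb := hbe.symm; have hfb := hbf.symm
    have hdc := hcd.symm; have hec := hce.symm; have hfc := hcf.symm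
    have hed := hde.symm; have hfd := hdf.symm; have hfe := hef.symm
    intro x
    rw [card_filter_four _ A1 A2 A3 A4 h12 h13 h14 h23 h24 h34]
    simp only [hA1, hA2, hA3, hA4, Finset.mem_insert, Finset.mem_singleton]
    by_cases hxa : x = a
    · subst hxa; simp [hab, hac, had, hae, haf]
    by_cases hxb : x = b
    · subst hxb; simp [hba, hbc, hbd, hbe, hbf]
    by_cases hxc : x = c
    · subst hxc; simp [hca, hcb, hcd, hce, hcf]
    by_cases hxd : x = d
    · subst hxd; simp [hda, hdb, hdc, hde, hdf]
    by_cases hxe : x = e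
    · subst hxe; simp [hea, heb, hec, hed, hef]
    by_cases hxf : x = f
    · subst hxf; simp [hfa, hfb, hfc, hfd, hfe]
    · simp [hxa, hxb, hxc, hxd, hxe, hxf]

/-- An `S(2,3,v)` with `v ≥ 3` is 5-even-free iff it contains no
Pasch configuration `{a,b,c}, {a,d,e}, {f,b,d}, {f,c,e}` on six distinct
points; in particular every 4-even-free `S(2,3,v)` is 5-even-free. -/
theorem stmt9 (V : Type*) [Fintype V] [DecidableEq V] (B : Finset (Finset V))
    (v : ℕ) (hv : Fintype.card V = v) (hv3 : 3 ≤ v)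
    (hsize : ∀ blk ∈ B, blk.card = 3)
    (hpair : ∀ x y : V, x ≠ y → (B.filter (fun blk => x ∈ blk ∧ y ∈ blk)).card = 1) :
    (EvenFree B 5 ↔
      ¬ ∃ a b c d e f : V, ([a, b, c, d, e, f] : List V).Pairwise (· ≠ ·) ∧
        ({a, b, c} : Finset V) ∈ B ∧ ({a, d, e} : Finset V) ∈ B ∧
        ({f, b, d} : Finset V) ∈ B ∧ ({f, c, e} : Finset V) ∈ B) ∧
    (EvenFree B 4 → EvenFree B 5) := by
  classical
  have noPasch_of_evenFree : ∀ r : ℕ, 4 ≤ r → EvenFree B r →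
      ¬ ∃ a b c d e f : V, ([a, b, c, d, e, f] : List V).Pairwise (· ≠ ·) ∧
        ({a, b, c} : Finset V) ∈ B ∧ ({a, d, e} : Finset V) ∈ B ∧
        ({f, b, d} : Finset V) ∈ B ∧ ({f, c, e} : Finset V) ∈ B := by
    intro r hr hef hp
    obtain ⟨C, hCB, hCne, hCcard, hCev⟩ := pasch_config B hp
    exact hef C hCB hCne (le_trans hCcard hr) hCev
  have evenFree_of_noPasch :
      (¬ ∃ a b c d e f : V, ([a, b, c, d, e, f] : List V).Pairwise (· ≠ ·) ∧
        ({a, b, c} : Finset V) ∈ B ∧ ({a, d, e} : Finset V) ∈ B ∧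
        ({f, b, d} : Finset V) ∈ B ∧ ({f, c, e} : Finset V) ∈ B) → EvenFree B 5 := by
    intro hnp C hCB hCne hCcard hCev
    have hc1 : 1 ≤ C.card := Finset.card_pos.mpr hCne
    have hsz : ∀ blk ∈ C, blk.card = 3 := fun blk hb => hsize blk (hCB hb)
    have hcases : C.card = 1 ∨ C.card = 2 ∨ C.card = 3 ∨ C.card = 4 ∨ C.card = 5 := by omega
    rcases hcases with h | h | h | h | h
    · exact no_odd C hsz ⟨0, by omega⟩ hCev
    · exact no_two C h hCev
    · exact no_odd C hsz ⟨1, by omega⟩ hCev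
    · exact hnp (extract_pasch B C hCB hsize hpair h hCev)
    · exact no_odd C hsz ⟨2, by omega⟩ hCev
  constructor
  · constructor
    · exact noPasch_of_evenFree 5 (by omega)
    · exact evenFree_of_noPasch
  · intro h4
    exact evenFree_of_noPasch (noPasch_of_evenFree 4 le_rfl h4)
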